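/- Let G be a triangle-free graph, let v be a vertex of G, and suppose that the subgraph of G induced on the set of vertices at distance exactly 2 from v has chromatic number greater than 2. Then G contains an induced cycle of length 5. -/

import Mathlib

/-- `G` has an induced cycle (hole) of length `n`: an injective map from
`ZMod n` to the vertices, with adjacency exactly between consecutive images. -/
def HasInducedCycle {V : Type*} (G : SimpleGraph V) (n : ℕ) : Prop :=
  ∃ f : ZMod n → V, Function.Injective f ∧
    ∀ i j : ZMod n, G.Adj (f i) (f j) ↔ (j = i + 1 ∨ i = j + 1)

lemma noTri {V : Type*} {G : SimpleGraph V} (hTF : G.CliqueFree 3) {a b c : V}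
    (hab : G.Adj a b) (hac : G.Adj a c) : ¬ G.Adj b c := by
  classical
  exact fun hbc => hTF {a, b, c} (SimpleGraph.is3Clique_triple_iff.2 ⟨hab, hac, hbc⟩)

/-- in a triangle-free graph, if the second neighbourhood of some
vertex induces a subgraph with chromatic number greater than 2, then the graph
contains an induced cycle of length 5. -/
theorem stmt_2 {V : Type*} (G : SimpleGraph V) (hTF : G.CliqueFree 3) (v : V)
    (h : (2 : ℕ∞) < (G.induce {u : V | G.dist v u = 2}).chromaticNumber) :
    HasInducedCycle G 5 := by
  -- get an edge inside the second neighbourhood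
  by_cases hE : ∃ x y : {u : V | G.dist v u = 2}, G.Adj x.1 y.1
  · obtain ⟨⟨x, hx⟩, ⟨y, hy⟩, hxy⟩ := hE
    simp only [Set.mem_setOf_eq] at hx hy
    -- walks of length 2 from v
    obtain ⟨p, hp⟩ := SimpleGraph.exists_walk_of_dist_ne_zero (G := G) (u := v) (v := x) (by omega)
    rw [hx] at hp
    obtain ⟨q, hq⟩ := SimpleGraph.exists_walk_of_dist_ne_zero (G := G) (u := v) (v := y) (by omega)
    rw [hy] at hq
    obtain ⟨a, hva, hax⟩ : ∃ a, G.Adj v a ∧ G.Adj a x := by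
      cases p with
      | nil => simp at hp
      | cons h1 p' =>
        cases p' with
        | nil => simp at hp
        | cons h2 p'' =>
          cases p'' with
          | nil => exact ⟨_, h1, h2⟩
          | cons h3 p''' => simp at hp
    obtain ⟨b, hvb, hby⟩ : ∃ b, G.Adj v b ∧ G.Adj b y := by
      cases q with
      | nil => simp at hq
      | cons h1 q' =>
        cases q' with
        | nil => simp at hq
        | cons h2 q'' =>
          cases q'' with
          | nil => exact ⟨_, h1, h2⟩
          | cons h3 q''' => simp at hq
    -- non-adjacency facts
    have hvx : ¬ G.Adj v x := fun hadj => by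
      have := SimpleGraph.dist_eq_one_iff_adj.2 hadj; omega
    have hvy : ¬ G.Adj v y := fun hadj => by
      have := SimpleGraph.dist_eq_one_iff_adj.2 hadj; omega
    have hay : ¬ G.Adj a y := fun hadj => noTri hTF hax hadj hxy
    have hbx : ¬ G.Adj b x := fun hadj => noTri hTF hby hadj hxy.symm
    have hab : ¬ G.Adj a b := noTri hTF hva hvb
    -- distinctness facts
    have dva : v ≠ a := hva.ne
    have dvx : v ≠ x := fun e => by rw [← e, SimpleGraph.dist_self] at hx; omega
    have dvy : v ≠ y := fun e => by rw [← e, SimpleGraph.dist_self] at hy; omega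
    have dvb : v ≠ b := hvb.ne
    have dax : a ≠ x := hax.ne
    have day : a ≠ y := fun e => hvy (e ▸ hva)
    have dab : a ≠ b := fun e => noTri hTF hax (e ▸ hby) hxy
    have dxy : x ≠ y := hxy.ne
    have dxb : x ≠ b := fun e => hvx (e ▸ hvb)
    have dyb : y ≠ b := hby.ne'
    have cases5 : ∀ i : ZMod 5, i = 0 ∨ i = 1 ∨ i = 2 ∨ i = 3 ∨ i = 4 := by decide
    refine ⟨![v, a, x, y, b], ?_, ?_⟩
    · intro i j hij
      rcases cases5 i with rfl | rfl | rfl | rfl | rfl <;>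
        rcases cases5 j with rfl | rfl | rfl | rfl | rfl <;>
        first
          | rfl
          | exact absurd hij (by
              first
                | exact dva | exact dva.symm | exact dvx | exact dvx.symm
                | exact dvy | exact dvy.symm | exact dvb | exact dvb.symm
                | exact dax | exact dax.symm | exact day | exact day.symm
                | exact dab | exact dab.symm | exact dxy | exact dxy.symm
                | exact dxb | exact dxb.symm | exact dyb | exact dyb.symm)
    · intro i j
      rcases cases5 i with rfl | rfl | rfl | rfl | rfl <;>
        rcases cases5 j with rfl | rfl | rfl | rfl | rfl <;>
        first
          | exact iff_of_true hva (by decide)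
          | exact iff_of_true hva.symm (by decide)
          | exact iff_of_true hax (by decide)
          | exact iff_of_true hax.symm (by decide)
          | exact iff_of_true hxy (by decide)
          | exact iff_of_true hxy.symm (by decide)
          | exact iff_of_true hby (by decide)
          | exact iff_of_true hby.symm (by decide)
          | exact iff_of_true hvb (by decide)
          | exact iff_of_true hvb.symm (by decide)
          | exact iff_of_false G.irrefl (by decide)
          | exact iff_of_false hvx (by decide)
          | exact iff_of_false (fun hh => hvx hh.symm) (by decide)
          | exact iff_of_false hvy (by decide)
          | exact iff_of_false (fun hh => hvy hh.symm) (by decide)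
          | exact iff_of_false hay (by decide)
          | exact iff_of_false (fun hh => hay hh.symm) (by decide)
          | exact iff_of_false hbx (by decide)
          | exact iff_of_false (fun hh => hbx hh.symm) (by decide)
          | exact iff_of_false hab (by decide)
          | exact iff_of_false (fun hh => hab hh.symm) (by decide)
  · -- no edge: the induced graph is 2-colorable, contradiction
    exfalso
    push_neg at hE
    have hc : (G.induce {u : V | G.dist v u = 2}).Colorable 2 := by
      refine ⟨SimpleGraph.Coloring.mk (fun _ => 0) ?_⟩
      intro p q hadj
      exact absurd ((SimpleGraph.comap_adj).1 hadj) (hE p q)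
    exact absurd hc.chromaticNumber_le (by exact_mod_cast not_le.2 h)
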